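/- Let A ∈ ℝ^{m×n} be a matrix all of whose columns A₁,…,A_n are nonzero, let b ∈ ℝᵐ and λ > 0. For each i ∈ {1,…,n}, let S_i = {z ∈ ℝᵐ : |⟨A_i, z⟩| ≤ λ}. Then the least squares lasso problem and the dual-form problem have equal optimal values: inf_{x ∈ ℝⁿ} ( ½‖Ax − b‖² + λ‖x‖₁ ) = inf_{(y₁,…,y_n) ∈ (ℝᵐ)ⁿ} ( ½‖b − Σ_{i=1}^n y_i‖² + Σ_{i=1}^n δ*(y_i, S_i) ). (Equivalence of problems (2.2a) and (2.2c) in Section 2.) -/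

import Mathlib

open scoped RealInnerProductSpace

/-- The support function `δ*(z, D) = sup_{x ∈ D} ⟪z, x⟫`, with values in `EReal`. -/
noncomputable def suppFn {X : Type*} [NormedAddCommGroup X] [InnerProductSpace ℝ X]
    (z : X) (D : Set X) : EReal :=
  ⨆ x ∈ D, ((⟪z, x⟫ : ℝ) : EReal)

lemma ereal_coe_sum {α : Type*} (s : Finset α) (f : α → ℝ) :
    ((∑ i ∈ s, f i : ℝ) : EReal) = ∑ i ∈ s, ((f i : EReal)) := by
  induction s using Finset.cons_induction with
  | empty => simp
  | cons a s ha ih => rw [Finset.sum_cons, Finset.sum_cons, EReal.coe_add, ih]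

lemma suppFn_smul {m : ℕ} (Ai : EuclideanSpace ℝ (Fin m)) (hAi : Ai ≠ 0) (lam : ℝ)
    (hlam : 0 < lam) (c : ℝ) :
    suppFn (c • Ai) {z : EuclideanSpace ℝ (Fin m) | |⟪Ai, z⟫| ≤ lam}
      = ((lam * |c| : ℝ) : EReal) := by
  have hn : (0:ℝ) < ‖Ai‖ ^ 2 := pow_pos (norm_pos_iff.mpr hAi) 2
  apply le_antisymm
  · refine iSup₂_le fun z hz => ?_
    rw [EReal.coe_le_coe_iff, real_inner_smul_left]
    calc c * ⟪Ai, z⟫ ≤ |c * ⟪Ai, z⟫| := le_abs_self _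
      _ = |c| * |⟪Ai, z⟫| := abs_mul _ _
      _ ≤ |c| * lam := by
          exact mul_le_mul_of_nonneg_left hz (abs_nonneg c)
      _ = lam * |c| := mul_comm _ _
  · set z0 : EuclideanSpace ℝ (Fin m) := (Real.sign c * lam / ‖Ai‖ ^ 2) • Ai with hz0
    have hinner : ⟪Ai, z0⟫ = Real.sign c * lam := by
      rw [hz0, real_inner_smul_right, real_inner_self_eq_norm_sq]
      field_simp
    have hmem : z0 ∈ {z : EuclideanSpace ℝ (Fin m) | |⟪Ai, z⟫| ≤ lam} := by
      simp only [Set.mem_setOf_eq, hinner, abs_mul, abs_of_pos hlam]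
      rcases lt_trichotomy c 0 with h|h|h
      · simp [Real.sign_of_neg h]
      · simp [h, Real.sign_zero, hlam.le]
      · simp [Real.sign_of_pos h]
    refine le_iSup₂_of_le z0 hmem ?_
    rw [EReal.coe_le_coe_iff, real_inner_smul_left, hinner]
    have : c * Real.sign c = |c| := by
      rcases lt_trichotomy c 0 with h|h|h
      · rw [Real.sign_of_neg h, abs_of_neg h]; ring
      · simp [h]
      · rw [Real.sign_of_pos h, abs_of_pos h]; ring
    rw [show c * (Real.sign c * lam) = c * Real.sign c * lam by ring, this, mul_comm]

lemma suppFn_top {m : ℕ} (Ai y : EuclideanSpace ℝ (Fin m)) (hAi : Ai ≠ 0) (lam : ℝ)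
    (hlam : 0 < lam) (h : ∀ c : ℝ, y ≠ c • Ai) :
    suppFn y {z : EuclideanSpace ℝ (Fin m) | |⟪Ai, z⟫| ≤ lam} = ⊤ := by
  have hn : (0:ℝ) < ‖Ai‖ ^ 2 := pow_pos (norm_pos_iff.mpr hAi) 2
  set w : EuclideanSpace ℝ (Fin m) := y - (⟪Ai, y⟫ / ‖Ai‖ ^ 2) • Ai with hw
  have hwne : w ≠ 0 := by
    intro h0
    exact h (⟪Ai, y⟫ / ‖Ai‖ ^ 2) (by rwa [hw, sub_eq_zero] at h0)
  have hwn : (0:ℝ) < ‖w‖ ^ 2 := pow_pos (norm_pos_iff.mpr hwne) 2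
  have hAw : ⟪Ai, w⟫ = 0 := by
    rw [hw, inner_sub_right, real_inner_smul_right, real_inner_self_eq_norm_sq]
    field_simp
    ring
  have hyw : ⟪y, w⟫ = ‖w‖ ^ 2 := by
    have : ⟪y, w⟫ = ⟪w, w⟫ + (⟪Ai, y⟫ / ‖Ai‖ ^ 2) * ⟪Ai, w⟫ := by
      rw [hw]; rw [show y = w + (⟪Ai, y⟫ / ‖Ai‖ ^ 2) • Ai by rw [hw]; abel]
      rw [inner_add_left, real_inner_smul_left]
      simp [hw]
    rw [this, hAw, real_inner_self_eq_norm_sq]; ring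
  rw [EReal.eq_top_iff_forall_lt]
  intro r
  set z : EuclideanSpace ℝ (Fin m) := ((r + 1) / ‖w‖ ^ 2) • w with hz
  have hmem : z ∈ {z : EuclideanSpace ℝ (Fin m) | |⟪Ai, z⟫| ≤ lam} := by
    rw [Set.mem_setOf_eq, hz, real_inner_smul_right, hAw, mul_zero, abs_zero]
    exact hlam.le
  have hval : ⟪y, z⟫ = r + 1 := by
    rw [hz, real_inner_smul_right, hyw]; field_simp
  calc (r : EReal) < ((r + 1 : ℝ) : EReal) := by exact_mod_cast lt_add_one r
    _ = ((⟪y, z⟫ : ℝ) : EReal) := by rw [hval]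
    _ ≤ _ := le_iSup₂_of_le z hmem le_rfl

lemma suppFn_nonneg {m : ℕ} (Ai y : EuclideanSpace ℝ (Fin m)) (lam : ℝ) (hlam : 0 < lam) :
    (0 : EReal) ≤ suppFn y {z : EuclideanSpace ℝ (Fin m) | |⟪Ai, z⟫| ≤ lam} := by
  have h0 : (0 : EuclideanSpace ℝ (Fin m)) ∈ {z : EuclideanSpace ℝ (Fin m) | |⟪Ai, z⟫| ≤ lam} := by
    simp [hlam.le]
  have := le_iSup₂_of_le (0 : EuclideanSpace ℝ (Fin m)) h0 le_rfl
    (f := fun x (_ : x ∈ {z : EuclideanSpace ℝ (Fin m) | |⟪Ai, z⟫| ≤ lam}) => ((⟪y, x⟫ : ℝ) : EReal))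
  simpa [suppFn] using this

/-- Section 2: the least squares lasso problem has the same optimal value as the
dual-form best approximation problem over the slabs `S_i = {z : |⟪A_i, z⟫| ≤ λ}`.
Here `A i` denotes the `i`-th column of the matrix `A`, all assumed nonzero, and
`A x = ∑ i, x i • A i`. -/
theorem lasso_eq_dual_BAP {m n : ℕ} (A : Fin n → EuclideanSpace ℝ (Fin m))
    (hA : ∀ i, A i ≠ 0) (b : EuclideanSpace ℝ (Fin m)) (lam : ℝ) (hlam : 0 < lam) :
    (⨅ x : Fin n → ℝ,
      ((1 / 2 * ‖(∑ i, x i • A i) - b‖ ^ 2 + lam * ∑ i, |x i| : ℝ) : EReal)) =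
    ⨅ y : Fin n → EuclideanSpace ℝ (Fin m),
      (((1 / 2 * ‖b - ∑ i, y i‖ ^ 2 : ℝ) : EReal) +
        ∑ i, suppFn (y i) {z : EuclideanSpace ℝ (Fin m) | |⟪A i, z⟫| ≤ lam}) := by
  have key : ∀ c : Fin n → ℝ,
      (((1 / 2 * ‖b - ∑ i, (c i • A i)‖ ^ 2 : ℝ) : EReal) +
        ∑ i, suppFn (c i • A i) {z : EuclideanSpace ℝ (Fin m) | |⟪A i, z⟫| ≤ lam}) =
      ((1 / 2 * ‖(∑ i, c i • A i) - b‖ ^ 2 + lam * ∑ i, |c i| : ℝ) : EReal) := by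
    intro c
    have h1 : ∀ i : Fin n, suppFn (c i • A i) {z : EuclideanSpace ℝ (Fin m) | |⟪A i, z⟫| ≤ lam}
        = ((lam * |c i| : ℝ) : EReal) := fun i => suppFn_smul (A i) (hA i) lam hlam (c i)
    simp only [h1]
    rw [← ereal_coe_sum, ← EReal.coe_add, ← Finset.mul_sum, norm_sub_rev]
  apply le_antisymm
  · refine le_iInf fun y => ?_
    by_cases h : ∀ i, ∃ c : ℝ, y i = c • A i
    · choose c hc using h
      have hy : y = fun i => c i • A i := funext hc
      rw [hy, key c]
      exact iInf_le _ c
    · push_neg at h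
      obtain ⟨i0, hi0⟩ := h
      have htop : suppFn (y i0) {z : EuclideanSpace ℝ (Fin m) | |⟪A i0, z⟫| ≤ lam} = ⊤ :=
        suppFn_top (A i0) (y i0) (hA i0) lam hlam hi0
      have hsum : (∑ i, suppFn (y i) {z : EuclideanSpace ℝ (Fin m) | |⟪A i, z⟫| ≤ lam}) = ⊤ := by
        refine top_le_iff.mp ?_
        calc (⊤ : EReal) = suppFn (y i0) {z : EuclideanSpace ℝ (Fin m) | |⟪A i0, z⟫| ≤ lam} :=
              htop.symm
          _ ≤ _ := Finset.single_le_sum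
              (fun i _ => suppFn_nonneg (A i) (y i) lam hlam) (Finset.mem_univ i0)
      rw [hsum, EReal.coe_add_top]
      exact le_top
  · refine le_iInf fun x => ?_
    exact iInf_le_of_le (fun i => x i • A i) (le_of_eq (key x))
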